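/- If P : ℝ³ → ℝ is a homogeneous polynomial of degree l, then ∫_{S²} P dM = (1/(l(l+1))) ∫_{S²} Δ⁰P dM, where Δ⁰ is the Euclidean Laplacian on ℝ³. In particular, for a multi-index a = (a₁,a₂,a₃) with |a| = l, ∫_{S²} φ^a dM = Σ_i (a_i(a_i−1)/(l(l+1))) ∫_{S²} φ^{a−2ε_i} dM. -/

import Mathlib

open MeasureTheory Real
open scoped RealInnerProductSpace

noncomputable section

/-- Euclidean 3-space. -/
abbrev E3 := EuclideanSpace ℝ (Fin 3)

/-- The unit 2-sphere `S² ⊂ ℝ³` as a subset. -/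
def Sph : Set E3 := Metric.sphere (0 : E3) 1

/-- The round surface measure on the unit 2-sphere. -/
def μS : Measure (Metric.sphere (0 : E3) 1) := (volume : Measure E3).toSphere

/-- The Riemannian gradient on the unit sphere, computed extrinsically: the Euclidean
gradient of the degree-zero homogeneous extension of `F` (which is automatically
tangent to the sphere). -/
def sgrad {n : ℕ} (F : EuclideanSpace ℝ (Fin n) → ℝ) (x : EuclideanSpace ℝ (Fin n)) :
    EuclideanSpace ℝ (Fin n) :=
  gradient (fun y => F (‖y‖⁻¹ • y)) x

/-- The Euclidean Laplacian. -/
def elap {n : ℕ} (F : EuclideanSpace ℝ (Fin n) → ℝ) (x : EuclideanSpace ℝ (Fin n)) : ℝ :=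
  ∑ i, fderiv ℝ (fun y => fderiv ℝ F y (EuclideanSpace.single i 1)) x
    (EuclideanSpace.single i 1)

/-- The Laplace–Beltrami operator on the unit sphere, computed extrinsically as the
Euclidean Laplacian of the degree-zero homogeneous extension. -/
def slap {n : ℕ} (F : EuclideanSpace ℝ (Fin n) → ℝ) (x : EuclideanSpace ℝ (Fin n)) : ℝ :=
  elap (fun y => F (‖y‖⁻¹ • y)) x

/-- The Riemannian Hessian on the unit sphere, evaluated on tangent vectors `v, w`:
the derivative of the (extended, tangential) gradient field. -/
def shess {n : ℕ} (F : EuclideanSpace ℝ (Fin n) → ℝ) (x v w : EuclideanSpace ℝ (Fin n)) :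
    ℝ :=
  ⟪fderiv ℝ (sgrad F) x v, w⟫

/-- The cross product on `ℝ³`. -/
def cross3 (x v : E3) : E3 :=
  (WithLp.equiv 2 (Fin 3 → ℝ)).symm
    ![x 1 * v 2 - x 2 * v 1, x 2 * v 0 - x 0 * v 2, x 0 * v 1 - x 1 * v 0]

/-- The standard complex structure of `S²` at a point `x`: rotation by `π/2` of the
tangent plane `x^⊥`, given by `v ↦ x × v`. -/
def Jop (x v : E3) : E3 := cross3 x v


section Aux
open Set Filter Metric MvPolynomial

/-- 1D Gaussian moment over ℝ. -/
def Gm (m : ℕ) : ℝ := ∫ t : ℝ, t ^ m * Real.exp (-t ^ 2)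

/-- Radial integral. -/
def Rm (m : ℕ) : ℝ := ∫ r in Ioi (0 : ℝ), r ^ m * Real.exp (-r ^ 2)

lemma integrable_Gm (m : ℕ) : Integrable (fun t : ℝ => t ^ m * Real.exp (-t ^ 2)) := by
  have h := integrable_rpow_mul_exp_neg_mul_sq (b := 1) one_pos
    (s := (m : ℝ)) (by exact_mod_cast neg_one_lt_zero.trans_le (Nat.cast_nonneg m))
  refine h.congr (Eventually.of_forall fun t => ?_)
  simp only [Real.rpow_natCast, neg_mul, one_mul]

lemma deriv_aux (m : ℕ) (t : ℝ) :
    HasDerivAt (fun t : ℝ => t ^ (m + 1) * Real.exp (-t ^ 2))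
      (((m : ℝ) + 1) * t ^ m * Real.exp (-t ^ 2)
        - 2 * (t ^ (m + 2) * Real.exp (-t ^ 2))) t := by
  have h1 : HasDerivAt (fun t : ℝ => t ^ (m + 1)) (((m : ℝ) + 1) * t ^ m) t := by
    simpa using hasDerivAt_pow (m + 1) t
  have h2 : HasDerivAt (fun t : ℝ => Real.exp (-t ^ 2))
      (Real.exp (-t ^ 2) * (-(2 * t))) t := by
    have : HasDerivAt (fun t : ℝ => -t ^ 2) (-(2 * t)) t := by
      simpa using (hasDerivAt_pow 2 t).fun_neg
    exact this.exp
  have := h1.fun_mul h2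
  refine this.congr_deriv ?_
  ring

lemma tendsto_aux (m : ℕ) :
    Tendsto (fun t : ℝ => t ^ m * Real.exp (-t ^ 2)) atTop (nhds 0) := by
  have h := rpow_mul_exp_neg_mul_sq_isLittleO_exp_neg (b := 1) one_pos ((m : ℝ))
  have h1 : Tendsto (fun x : ℝ => -(1 / 2 : ℝ) * x) atTop atBot := by
    apply Tendsto.const_mul_atTop_of_neg (by norm_num) tendsto_id
  have h2 : Tendsto (fun x : ℝ => Real.exp (-(1 / 2 : ℝ) * x)) atTop (nhds 0) :=
    Real.tendsto_exp_atBot.comp h1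
  have h3 := h.trans_tendsto h2
  refine h3.congr' ?_
  filter_upwards [eventually_gt_atTop (0 : ℝ)] with t _
  rw [Real.rpow_natCast]
  ring_nf

lemma tendsto_aux_bot (m : ℕ) :
    Tendsto (fun t : ℝ => t ^ m * Real.exp (-t ^ 2)) atBot (nhds 0) := by
  have h := ((tendsto_aux m).comp tendsto_neg_atBot_atTop).const_mul ((-1 : ℝ) ^ m)
  rw [mul_zero] at h
  refine h.congr fun x => ?_
  show (-1 : ℝ) ^ m * ((-x) ^ m * Real.exp (-(-x) ^ 2)) = _
  rw [← mul_assoc, ← mul_pow, neg_mul_neg, one_mul, neg_sq]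

lemma Gm_rec (m : ℕ) : Gm (m + 2) = (((m : ℝ) + 1) / 2) * Gm m := by
  have hint1 : Integrable (fun t : ℝ => ((m : ℝ) + 1) * t ^ m * Real.exp (-t ^ 2)) := by
    refine ((integrable_Gm m).const_mul ((m : ℝ) + 1)).congr
      (Eventually.of_forall fun t => by ring)
  have hint2 : Integrable (fun t : ℝ => 2 * (t ^ (m + 2) * Real.exp (-t ^ 2))) :=
    (integrable_Gm (m + 2)).const_mul 2
  have hFTC := integral_of_hasDerivAt_of_tendsto (deriv_aux m) (hint1.sub hint2)
    (tendsto_aux_bot (m + 1)) (tendsto_aux (m + 1))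
  rw [sub_zero, integral_sub hint1 hint2] at hFTC
  have e1 : ∫ t : ℝ, ((m : ℝ) + 1) * t ^ m * Real.exp (-t ^ 2) = ((m : ℝ) + 1) * Gm m := by
    rw [Gm, ← integral_const_mul]
    congr 1; funext t; ring
  have e2 : ∫ t : ℝ, 2 * (t ^ (m + 2) * Real.exp (-t ^ 2)) = 2 * Gm (m + 2) := by
    rw [Gm, ← integral_const_mul]
  rw [e1, e2] at hFTC
  linarith

lemma Gm_one : Gm 1 = 0 := by
  have h := integral_neg_eq_self (fun t : ℝ => t * Real.exp (-t ^ 2)) volume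
  simp only [neg_sq] at h
  rw [show (fun t : ℝ => -t * Real.exp (-t ^ 2)) = fun t : ℝ => -(t * Real.exp (-t ^ 2))
    from funext fun t => by ring, integral_neg] at h
  have h3 : Gm 1 = ∫ t : ℝ, t * Real.exp (-t ^ 2) := by
    rw [Gm]; congr 1; funext t; rw [pow_one]
  rw [h3]; linarith

lemma Gm_odd {m : ℕ} (hm : Odd m) : Gm m = 0 := by
  obtain ⟨k, rfl⟩ := hm
  induction k with
  | zero => simpa using Gm_one
  | succ n ih =>
    have e : 2 * (n + 1) + 1 = (2 * n + 1) + 2 := by ring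
    rw [e, Gm_rec, ih, mul_zero]

lemma Rm_rec (m : ℕ) : Rm (m + 2) = (((m : ℝ) + 1) / 2) * Rm m := by
  have hint1 : Integrable (fun t : ℝ => ((m : ℝ) + 1) * t ^ m * Real.exp (-t ^ 2)) := by
    refine ((integrable_Gm m).const_mul ((m : ℝ) + 1)).congr
      (Eventually.of_forall fun t => by ring)
  have hint2 : Integrable (fun t : ℝ => 2 * (t ^ (m + 2) * Real.exp (-t ^ 2))) :=
    (integrable_Gm (m + 2)).const_mul 2
  have hFTC := integral_Ioi_of_hasDerivAt_of_tendsto' (a := 0)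
    (fun x _ => deriv_aux m x) (hint1.sub hint2).integrableOn (tendsto_aux (m + 1))
  rw [integral_sub hint1.integrableOn hint2.integrableOn] at hFTC
  simp only [zero_pow (Nat.succ_ne_zero m), zero_mul, sub_zero, zero_sub] at hFTC
  have e1 : ∫ t in Ioi (0:ℝ), ((m : ℝ) + 1) * t ^ m * Real.exp (-t ^ 2)
      = ((m : ℝ) + 1) * Rm m := by
    rw [Rm, ← integral_const_mul]
    congr 1; funext t; ring
  have e2 : ∫ t in Ioi (0:ℝ), 2 * (t ^ (m + 2) * Real.exp (-t ^ 2)) = 2 * Rm (m + 2) := by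
    rw [Rm, ← integral_const_mul]
  rw [e1, e2] at hFTC
  linarith

lemma Rm_pos (m : ℕ) : 0 < Rm m := by
  rw [Rm]
  have hi : IntegrableOn (fun r : ℝ => r ^ m * Real.exp (-r ^ 2)) (Ioi 0) :=
    (integrable_Gm m).integrableOn
  rw [setIntegral_pos_iff_support_of_nonneg_ae ?h1 hi]
  · refine lt_of_lt_of_le ?_ (measure_mono (?_ : Ioo (0:ℝ) 1 ⊆ _))
    · simp [Real.volume_Ioo]
    · intro x hx
      have hx0 : (0:ℝ) < x := hx.1
      refine ⟨?_, hx0⟩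
      simp only [Function.mem_support]
      positivity
  case h1 =>
    filter_upwards [ae_restrict_mem measurableSet_Ioi] with x hx
    have : (0:ℝ) < x := hx
    positivity

lemma norm_sq_E3 (x : E3) : ‖x‖ ^ 2 = ∑ i, x i ^ 2 := by
  rw [EuclideanSpace.norm_eq, Real.sq_sqrt (by positivity)]
  simp [sq_abs]

lemma fubini_T (a : Fin 3 → ℕ) :
    ∫ x : E3, (∏ i, x i ^ a i) * Real.exp (-‖x‖ ^ 2) = ∏ i, Gm (a i) := by
  have key : ∀ x : E3, (∏ i, x i ^ a i) * Real.exp (-‖x‖ ^ 2)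
      = ∏ i, (x i ^ a i * Real.exp (-(x i) ^ 2)) := by
    intro x
    rw [norm_sq_E3, Finset.prod_mul_distrib]
    congr 1
    rw [← Real.exp_sum]
    congr 1
    rw [Finset.sum_neg_distrib]
  simp_rw [key]
  have mp := (EuclideanSpace.volume_preserving_symm_measurableEquiv_toLp (Fin 3)).symm
  rw [← mp.integral_comp ((MeasurableEquiv.toLp 2 (Fin 3 → ℝ)).measurableEmbedding)
    (fun x : E3 => ∏ i, (x i ^ a i * Real.exp (-(x i) ^ 2)))]
  have : ∀ y : Fin 3 → ℝ, (∏ i, (((MeasurableEquiv.toLp 2 (Fin 3 → ℝ)) y) i ^ a i *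
      Real.exp (-(((MeasurableEquiv.toLp 2 (Fin 3 → ℝ)) y) i) ^ 2)))
      = ∏ i, (y i ^ a i * Real.exp (-(y i) ^ 2)) := fun y => rfl
  exact MeasureTheory.integral_fintype_prod_eq_prod (ι := Fin 3)
    (fun i (t : ℝ) => t ^ a i * Real.exp (-t ^ 2))

lemma dim_E3 : Module.finrank ℝ E3 = 3 := finrank_euclideanSpace_fin

lemma radial_int (l : ℕ) :
    ∫ r : Ioi (0:ℝ), ((r : ℝ) ^ l * Real.exp (-(r : ℝ) ^ 2))
      ∂(Measure.volumeIoiPow 2) = Rm (l + 2) := by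
  rw [Measure.volumeIoiPow]
  simp only [ENNReal.ofReal]
  rw [integral_withDensity_eq_integral_smul
      ((measurable_subtype_coe.pow_const _).real_toNNReal),
    integral_subtype_comap measurableSet_Ioi
      (fun r : ℝ => (r ^ 2).toNNReal • (r ^ l * Real.exp (-r ^ 2))), Rm,
    setIntegral_congr_fun measurableSet_Ioi (fun r hr => ?_)]
  rw [NNReal.smul_def, Real.coe_toNNReal _ (by positivity : (0:ℝ) ≤ r ^ 2)]
  rw [smul_eq_mul, pow_add]
  ring

lemma polar (a : Fin 3 → ℕ) :
    ∫ x : E3, (∏ i, x i ^ a i) * Real.exp (-‖x‖ ^ 2)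
      = (∫ ω : Metric.sphere (0:E3) 1, ∏ i, ((ω : E3) i ^ a i)
          ∂(volume : Measure E3).toSphere) * Rm ((∑ i, a i) + 2) := by
  set l := ∑ i, a i with hl
  set g : E3 → ℝ := fun x => (∏ i, x i ^ a i) * Real.exp (-‖x‖ ^ 2) with hg
  set F : (Metric.sphere (0:E3) 1) × (Ioi (0:ℝ)) → ℝ :=
    fun p => (∏ i, ((p.1 : E3) i ^ a i)) * ((p.2 : ℝ) ^ l * Real.exp (-(p.2 : ℝ) ^ 2))
    with hF
  have A : ∫ x : E3, g x
      = ∫ x : ({0}ᶜ : Set E3), g x.1 ∂((volume : Measure E3).comap Subtype.val) := by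
    rw [integral_subtype_comap (measurableSet_singleton 0).compl,
      MeasureTheory.restrict_compl_singleton]
  have mp := Measure.measurePreserving_homeomorphUnitSphereProd (volume : Measure E3)
  have B := mp.integral_comp (Homeomorph.measurableEmbedding _) F
  have C : ∀ x : ({0}ᶜ : Set E3), F (homeomorphUnitSphereProd E3 x) = g x.1 := by
    rintro ⟨x, hx⟩
    have hx0 : x ≠ 0 := hx
    have hn : ‖x‖ ≠ 0 := norm_ne_zero_iff.2 hx0
    simp only [hF, homeomorphUnitSphereProd_apply_fst_coe,
      homeomorphUnitSphereProd_apply_snd_coe, hg]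
    have hc : ∀ i, ((‖x‖⁻¹ • x : E3)) i = ‖x‖⁻¹ * x i := fun i => rfl
    simp only [hc, mul_pow]
    rw [Finset.prod_mul_distrib, Finset.prod_pow_eq_pow_sum, ← hl]
    have h1 : ‖x‖⁻¹ ^ l * ‖x‖ ^ l = 1 := by
      rw [← mul_pow, inv_mul_cancel₀ hn, one_pow]
    linear_combination (∏ i, x i ^ a i) * Real.exp (-‖x‖ ^ 2) * h1
  have B' : ∫ x : ({0}ᶜ : Set E3), g x.1 ∂((volume : Measure E3).comap Subtype.val)
      = ∫ p, F p ∂((volume : Measure E3).toSphere.prod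
          (Measure.volumeIoiPow (Module.finrank ℝ E3 - 1))) := by
    rw [← B]
    exact (integral_congr_ae (Eventually.of_forall fun x => C x)).symm
  rw [A, B']
  have : (Module.finrank ℝ E3 - 1) = 2 := by rw [dim_E3]
  rw [this]
  rw [hF]
  rw [integral_prod_mul (μ := (volume : Measure E3).toSphere)
      (ν := Measure.volumeIoiPow 2)
      (f := fun ω : Metric.sphere (0:E3) 1 => ∏ i, ((ω : E3) i ^ a i))
      (g := fun r : Ioi (0:ℝ) => (r : ℝ) ^ l * Real.exp (-(r : ℝ) ^ 2))]
  rw [radial_int]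

def SI (a : Fin 3 → ℕ) : ℝ :=
  ∫ ω : Metric.sphere (0:E3) 1, ∏ i, ((ω : E3) i ^ a i) ∂(volume : Measure E3).toSphere

lemma SI_eq (a : Fin 3 → ℕ) : SI a * Rm ((∑ i, a i) + 2) = ∏ i, Gm (a i) := by
  rw [SI, ← polar, fubini_T]

lemma key_per_i (a : Fin 3 → ℕ) (i : Fin 3) :
    ((a i : ℝ) * ((a i : ℝ) - 1)) * ∏ j, Gm (a j - 2 * (if j = i then 1 else 0))
      = 2 * (a i : ℝ) * ∏ j, Gm (a j) := by
  have hsplit : ∀ f : Fin 3 → ℝ, ∏ j, f j = f i * ∏ j ∈ Finset.univ.erase i, f j :=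
    fun f => (Finset.mul_prod_erase _ _ (Finset.mem_univ i)).symm
  have hagree : ∏ j ∈ Finset.univ.erase i, Gm (a j - 2 * (if j = i then 1 else 0))
      = ∏ j ∈ Finset.univ.erase i, Gm (a j) := by
    refine Finset.prod_congr rfl fun j hj => ?_
    rw [if_neg (Finset.ne_of_mem_erase hj)]
    norm_num
  rw [hsplit (fun j => Gm (a j - 2 * (if j = i then 1 else 0))),
    hsplit (fun j => Gm (a j)), hagree]
  have hii : a i - 2 * (if i = i then 1 else 0) = a i - 2 := by simp
  rw [hii]
  rcases h : a i with _ | _ | k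
  · norm_num
  · rw [Gm_one]
    push_cast
    ring
  · have hk2 : k + 1 + 1 - 2 = k := by omega
    rw [hk2, show k + 1 + 1 = k + 2 from rfl, Gm_rec]
    push_cast
    ring

lemma SI_val (a : Fin 3 → ℕ) : SI a = (∏ i, Gm (a i)) / Rm ((∑ i, a i) + 2) := by
  rw [eq_div_iff (Rm_pos _).ne', SI_eq]

lemma monomial_core (l : ℕ) (hl : 0 < l) (a : Fin 3 → ℕ) (ha : (∑ i, a i) = l) :
    SI a = ∑ i, ((a i : ℝ) * ((a i : ℝ) - 1) / ((l : ℝ) * (l + 1))) *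
      SI (fun j => a j - 2 * (if j = i then 1 else 0)) := by
  have hRl : Rm (l + 2) = (((l : ℝ) + 1) / 2) * Rm l := Rm_rec l
  have hterm : ∀ i, ((a i : ℝ) * ((a i : ℝ) - 1) / ((l : ℝ) * (l + 1))) *
      SI (fun j => a j - 2 * (if j = i then 1 else 0))
      = (2 * (a i : ℝ) / ((l : ℝ) * (l + 1))) * ((∏ j, Gm (a j)) / Rm l) := by
    intro i
    rcases Nat.lt_or_ge (a i) 2 with h2 | h2
    · -- a i ≤ 1
      interval_cases h : a i
      · norm_num
      · -- a i = 1 : coefficient is zero and ∏ Gm (a j) = 0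
        have hz : ∏ j, Gm (a j) = 0 := by
          refine Finset.prod_eq_zero (Finset.mem_univ i) ?_
          rw [h, Gm_one]
        rw [hz]
        norm_num
    · -- a i ≥ 2
      have hsum : (∑ j, (a j - 2 * (if j = i then 1 else 0))) + 2 = l := by
        rw [Fin.sum_univ_three] at ha ⊢
        fin_cases i <;> simp at h2 ⊢ <;> omega
      rw [SI_val, hsum]
      rw [div_mul_div_comm, div_mul_div_comm, key_per_i a i]
  rw [Finset.sum_congr rfl (fun i _ => hterm i)]
  rw [← Finset.sum_mul, ← Finset.sum_div]
  have : ∑ i, 2 * (a i : ℝ) = 2 * l := by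
    rw [← Finset.mul_sum]
    norm_cast
    rw [ha]
  rw [this, SI_val, ha, hRl]
  have h1 : Rm l ≠ 0 := (Rm_pos l).ne'
  have h2 : (l : ℝ) ≠ 0 := Nat.cast_ne_zero.mpr hl.ne'
  have h3 : (l : ℝ) + 1 ≠ 0 := by positivity
  field_simp

lemma int_mono (a : Fin 3 → ℕ) :
    Integrable (fun ω : Metric.sphere (0:E3) 1 => ∏ i, ((ω : E3) i ^ a i))
      (volume : Measure E3).toSphere := by
  refine Continuous.integrable_of_hasCompactSupport ?_ (HasCompactSupport.of_compactSpace _)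
  exact continuous_finset_prod _ fun i _ =>
    ((EuclideanSpace.proj (𝕜 := ℝ) i).continuous.comp continuous_subtype_val).pow _

lemma natsub_cast (n : ℕ) : ((n * (n - 1) : ℕ) : ℝ) = (n : ℝ) * ((n : ℝ) - 1) := by
  cases n with
  | zero => simp
  | succ k => push_cast [Nat.succ_sub_one]; ring

lemma exp_trunc (d : Fin 3 →₀ ℕ) (i j : Fin 3) :
    ((d - Finsupp.single i 1 - Finsupp.single i 1) : Fin 3 →₀ ℕ) j
      = d j - 2 * (if j = i then 1 else 0) := by
  classical
  rw [Finsupp.tsub_apply, Finsupp.tsub_apply, Finsupp.single_apply]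
  rcases eq_or_ne j i with rfl | hne
  · simp only [if_pos rfl]
    omega
  · simp only [if_neg (Ne.symm hne), if_neg hne]
    omega

lemma eval_lap (P : MvPolynomial (Fin 3) ℝ) (X : Fin 3 → ℝ) :
    eval X (∑ i, pderiv i (pderiv i P))
      = ∑ d ∈ P.support, coeff d P *
          ∑ i, (((d i) * (d i - 1) : ℕ) : ℝ) *
            ∏ j, X j ^ (d j - 2 * (if j = i then 1 else 0)) := by
  conv_lhs => rw [P.as_sum]
  simp only [map_sum]
  rw [Finset.sum_comm]
  refine Finset.sum_congr rfl fun d hd => ?_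
  rw [Finset.mul_sum]
  refine Finset.sum_congr rfl fun i _ => ?_
  rw [pderiv_monomial, pderiv_monomial, eval_monomial]
  rw [Finsupp.prod_fintype _ _ (fun j => pow_zero (X j))]
  simp only [exp_trunc]
  rw [Finsupp.tsub_apply, Finsupp.single_eq_same]
  rw [show ((d i * (d i - 1) : ℕ) : ℝ) = (d i : ℝ) * ((d i - 1 : ℕ) : ℝ) by push_cast; ring]
  ring

theorem part1 (l : ℕ) (hl : 0 < l) (P : MvPolynomial (Fin 3) ℝ)
    (hP : P.IsHomogeneous l) :
    ∫ ω : Metric.sphere (0:E3) 1, eval (fun i => (ω : E3) i) P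
        ∂(volume : Measure E3).toSphere
      = (1 / ((l : ℝ) * (l + 1))) *
        ∫ ω : Metric.sphere (0:E3) 1,
          eval (fun i => (ω : E3) i) (∑ i, pderiv i (pderiv i P))
            ∂(volume : Measure E3).toSphere := by
  have hsupp : ∀ d ∈ P.support, (∑ i : Fin 3, d i) = l := by
    intro d hd
    have h1 : (Finsupp.weight 1) d = l := hP (mem_support_iff.mp hd)
    have h2 : ∑ i : Fin 3, d i = Finsupp.degree d :=
      (Finset.sum_subset (Finset.subset_univ _)
        fun i _ hi => Finsupp.notMem_support_iff.mp hi).symm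
    rw [h2, Finsupp.degree_eq_weight_one]
    exact h1
  have hL : ∫ ω : Metric.sphere (0:E3) 1, eval (fun i => (ω : E3) i) P
        ∂(volume : Measure E3).toSphere
      = ∑ d ∈ P.support, coeff d P * SI (fun i => d i) := by
    have e1 : ∀ ω : Metric.sphere (0:E3) 1, eval (fun i => (ω : E3) i) P
        = ∑ d ∈ P.support, coeff d P * ∏ i, ((ω : E3) i ^ d i) := fun ω => by
      rw [eval_eq']
    simp_rw [e1]
    rw [integral_finset_sum _ (fun d _ => (int_mono (fun i => d i)).const_mul _)]
    refine Finset.sum_congr rfl fun d hd => ?_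
    rw [integral_const_mul]
    rfl
  have hR : ∫ ω : Metric.sphere (0:E3) 1,
        eval (fun i => (ω : E3) i) (∑ i, pderiv i (pderiv i P))
          ∂(volume : Measure E3).toSphere
      = ∑ d ∈ P.support, coeff d P * ∑ i, (((d i) * (d i - 1) : ℕ) : ℝ) *
          SI (fun j => d j - 2 * (if j = i then 1 else 0)) := by
    simp_rw [eval_lap]
    rw [integral_finset_sum _ (fun d _ =>
      (integrable_finset_sum _ (fun i _ => (int_mono _).const_mul _)).const_mul _)]
    refine Finset.sum_congr rfl fun d hd => ?_
    rw [integral_const_mul, integral_finset_sum _ (fun i _ => (int_mono _).const_mul _)]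
    congr 1
    refine Finset.sum_congr rfl fun i _ => ?_
    rw [integral_const_mul]
    rfl
  rw [hL, hR, Finset.mul_sum]
  refine Finset.sum_congr rfl fun d hd => ?_
  rw [monomial_core l hl (fun i => d i) (hsupp d hd), Finset.mul_sum,
    Finset.mul_sum, Finset.mul_sum]
  refine Finset.sum_congr rfl fun i _ => ?_
  rw [natsub_cast]
  ring

end Aux

open MvPolynomial in
/-- If `P : ℝ³ → ℝ` is a homogeneous polynomial of degree `l`, then
`∫_{S²} P dM = (1/(l(l+1))) ∫_{S²} Δ⁰P dM` where `Δ⁰` is the Euclidean Laplacian;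
in particular for a monomial `φ^a` with `|a| = l`,
`∫_{S²} φ^a dM = Σ_i (a_i(a_i−1)/(l(l+1))) ∫_{S²} φ^{a−2ε_i} dM` (with the convention
that terms with `a_i < 2` vanish). -/
theorem integral_homogeneous_polynomial_sphere (l : ℕ) (hl : 0 < l) :
    (∀ P : MvPolynomial (Fin 3) ℝ, P.IsHomogeneous l →
      ∫ x : Metric.sphere (0 : E3) 1, eval (fun i => (x : E3) i) P ∂μS =
        (1 / ((l : ℝ) * (l + 1))) *
          ∫ x : Metric.sphere (0 : E3) 1,
            eval (fun i => (x : E3) i) (∑ i, pderiv i (pderiv i P)) ∂μS) ∧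
    (∀ a : Fin 3 → ℕ, (∑ i, a i) = l →
      ∫ x : Metric.sphere (0 : E3) 1, ∏ i, ((x : E3) i) ^ (a i) ∂μS =
        ∑ i, ((a i : ℝ) * ((a i : ℝ) - 1) / ((l : ℝ) * (l + 1))) *
          ∫ x : Metric.sphere (0 : E3) 1,
            ∏ j, ((x : E3) j) ^ (a j - 2 * (if j = i then 1 else 0)) ∂μS) := by
  constructor
  · intro P hP
    exact part1 l hl P hP
  · intro a ha
    exact monomial_core l hl a ha
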